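/- Let (X, μ) and (Y, ν) be probability spaces, let T be an invertible bimeasurable measure-preserving transformation of (X, μ) and S an invertible bimeasurable measure-preserving transformation of (Y, ν), and suppose the Koopman operators of T on L²(X, μ) and of S on L²(Y, ν) each have simple spectrum (admit a cyclic vector). If there exists a sequence (n_i) of natural numbers such that the Koopman operators of (T × S)^[n_i] on L²(X × Y, μ ⊗ ν) converge in the weak operator topology to the Koopman operator of id × S (i.e. for all F, G ∈ L²(X × Y, μ ⊗ ν), ⟪F ∘ (T × S)^[n_i], G⟫ → ⟪F ∘ (id × S), G⟫), then the Koopman operator of T × S on L²(X × Y, μ ⊗ ν) has simple spectrum. -/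

import Mathlib

open MeasureTheory Filter

open ENNReal


section Aux
variable {X Y : Type*} [MeasurableSpace X] [MeasurableSpace Y]
  {μ : Measure X} {ν : Measure Y}

/-- zpow of a measurable equiv, as a bare function. -/
noncomputable def mzpow (T : X ≃ᵐ X) : ℤ → X → X
  | Int.ofNat m => (⇑T)^[m]
  | Int.negSucc m => (⇑T.symm)^[m + 1]

lemma mzpow_eq (T : X ≃ᵐ X) (k : ℤ) : mzpow T k = ⇑(T.toEquiv ^ k) := by
  cases k with
  | ofNat m =>
      show (⇑T)^[m] = _
      rw [← MeasurableEquiv.coe_toEquiv T, Equiv.Perm.iterate_eq_pow, Int.ofNat_eq_coe,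
        zpow_natCast]
  | negSucc m =>
      show (⇑T.symm)^[m + 1] = _
      rw [zpow_negSucc, ← inv_pow, Equiv.Perm.inv_def, ← MeasurableEquiv.coe_toEquiv_symm T,
        Equiv.Perm.iterate_eq_pow]

lemma measurePreserving_mzpow {T : X ≃ᵐ X} (hT : MeasurePreserving T μ μ) (k : ℤ) :
    MeasurePreserving (mzpow T k) μ μ := by
  cases k with
  | ofNat m => exact hT.iterate m
  | negSucc m => exact (hT.symm T).iterate (m + 1)

lemma mzpow_zero (T : X ≃ᵐ X) : mzpow T 0 = id := rfl

/-- `Equiv.prodCongr` on permutations, as a monoid hom. -/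
def prodCongrPermHom (X Y : Type*) :
    Equiv.Perm X × Equiv.Perm Y →* Equiv.Perm (X × Y) where
  toFun p := p.1.prodCongr p.2
  map_one' := by ext z <;> simp
  map_mul' p q := by ext z <;> simp

lemma prodCongr_zpow_apply (T : X ≃ᵐ X) (S : Y ≃ᵐ Y) (k : ℤ) (z : X × Y) :
    ((T.toEquiv.prodCongr S.toEquiv) ^ k) z = (mzpow T k z.1, mzpow S k z.2) := by
  have h : (T.toEquiv.prodCongr S.toEquiv) ^ k
      = (T.toEquiv ^ k).prodCongr (S.toEquiv ^ k) := by
    have := (prodCongrPermHom X Y).map_zpow (T.toEquiv, S.toEquiv) k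
    simpa [prodCongrPermHom, Prod.pow_def] using this.symm
  rw [h, mzpow_eq, mzpow_eq]
  rfl

lemma mzpow_apply_self (S : Y ≃ᵐ Y) (k : ℤ) (y : Y) :
    mzpow S k (S y) = mzpow S (k + 1) y := by
  have : S y = (S.toEquiv ^ (1 : ℤ)) y := by simp
  rw [mzpow_eq, mzpow_eq, this, ← Equiv.Perm.mul_apply, ← zpow_add]

lemma mzpow_apply_symm (S : Y ≃ᵐ Y) (k : ℤ) (y : Y) :
    mzpow S k (S.symm y) = mzpow S (k - 1) y := by
  have : S.symm y = (S.toEquiv ^ (-1 : ℤ)) y := by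
    simp [zpow_neg, zpow_one, Equiv.Perm.inv_def]
  rw [mzpow_eq, mzpow_eq, this, ← Equiv.Perm.mul_apply, ← zpow_add]
  rfl

lemma mzpow_apply_iterate (T : X ≃ᵐ X) (k : ℤ) (m : ℕ) (x : X) :
    mzpow T k ((⇑T)^[m] x) = mzpow T (k + m) x := by
  induction m generalizing k with
  | zero => simp
  | succ m ih =>
      rw [Function.iterate_succ_apply', mzpow_apply_self, ih]
      congr 1
      push_cast
      ring

lemma mzpow_apply_iterate_symm (T : X ≃ᵐ X) (k : ℤ) (m : ℕ) (x : X) :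
    mzpow T k ((⇑T.symm)^[m] x) = mzpow T (k - m) x := by
  induction m generalizing k with
  | zero => simp
  | succ m ih =>
      rw [Function.iterate_succ_apply', mzpow_apply_symm, ih]
      congr 1
      push_cast
      ring

section Tensor
variable [SFinite ν]

lemma tensor_aesm {u : X → ℂ} {v : Y → ℂ} (hu : AEStronglyMeasurable u μ)
    (hv : AEStronglyMeasurable v ν) :
    AEStronglyMeasurable (fun z : X × Y => u z.1 * v z.2) (μ.prod ν) :=
  (hu.comp_quasiMeasurePreserving Measure.quasiMeasurePreserving_fst).mul
    (hv.comp_quasiMeasurePreserving Measure.quasiMeasurePreserving_snd)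

lemma eLpNorm_tensor {u : X → ℂ} {v : Y → ℂ} (hu : AEStronglyMeasurable u μ)
    (hv : AEStronglyMeasurable v ν) :
    eLpNorm (fun z : X × Y => u z.1 * v z.2) 2 (μ.prod ν)
      = eLpNorm u 2 μ * eLpNorm v 2 ν := by
  rw [eLpNorm_eq_lintegral_rpow_enorm_toReal (two_ne_zero) (by norm_num),
    eLpNorm_eq_lintegral_rpow_enorm_toReal (two_ne_zero) (by norm_num),
    eLpNorm_eq_lintegral_rpow_enorm_toReal (two_ne_zero) (by norm_num)]
  simp only [ENNReal.toReal_ofNat, enorm_eq_nnnorm]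
  have h1 : ∀ z : X × Y, (‖u z.1 * v z.2‖₊ : ℝ≥0∞) ^ (2 : ℝ)
      = ((‖u z.1‖₊ : ℝ≥0∞) ^ (2 : ℝ)) * ((‖v z.2‖₊ : ℝ≥0∞) ^ (2 : ℝ)) := by
    intro z
    rw [← ENNReal.mul_rpow_of_nonneg _ _ (by norm_num)]
    congr 1
    rw [nnnorm_mul]
    push_cast
    ring
  rw [lintegral_congr h1,
    lintegral_prod_mul (f := fun x => (‖u x‖₊ : ℝ≥0∞) ^ (2 : ℝ))
      (g := fun y => (‖v y‖₊ : ℝ≥0∞) ^ (2 : ℝ))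
      (hu.aemeasurable.enorm.pow_const (2 : ℝ)) (hv.aemeasurable.enorm.pow_const (2 : ℝ)),
    ENNReal.mul_rpow_of_nonneg _ _ (by norm_num)]

lemma memLp_tensor {u : X → ℂ} {v : Y → ℂ} (hu : MemLp u 2 μ) (hv : MemLp v 2 ν) :
    MemLp (fun z : X × Y => u z.1 * v z.2) 2 (μ.prod ν) := by
  refine ⟨tensor_aesm hu.1 hv.1, ?_⟩
  rw [eLpNorm_tensor hu.1 hv.1]
  exact ENNReal.mul_lt_top hu.2 hv.2

lemma ae_eq_fst {p q : X → ℂ} (h : p =ᵐ[μ] q) :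
    (fun z : X × Y => p z.1) =ᵐ[μ.prod ν] fun z => q z.1 :=
  Measure.QuasiMeasurePreserving.ae_eq_comp Measure.quasiMeasurePreserving_fst h

lemma ae_eq_snd {p q : Y → ℂ} (h : p =ᵐ[ν] q) :
    (fun z : X × Y => p z.2) =ᵐ[μ.prod ν] fun z => q z.2 :=
  Measure.QuasiMeasurePreserving.ae_eq_comp Measure.quasiMeasurePreserving_snd h

end Tensor

lemma vanish_of_dense {E F : Type*} [NormedAddCommGroup E] [NormedSpace ℂ E]
    [NormedAddCommGroup F] [NormedSpace ℂ F] {s : Set E}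
    (hs : Dense (↑(Submodule.span ℂ s) : Set E)) (φ : E →L[ℂ] F)
    (h : ∀ x ∈ s, φ x = 0) : ∀ x, φ x = 0 := by
  intro x
  have hker : (↑(Submodule.span ℂ s) : Set E) ⊆ {x | φ x = 0} := by
    intro y hy
    exact (Submodule.span_le (p := LinearMap.ker (φ : E →ₗ[ℂ] F))).2
      (fun z hz => LinearMap.mem_ker.2 (h z hz)) hy
  have hcl : IsClosed {x : E | φ x = 0} := isClosed_eq φ.continuous continuous_const
  have := closure_minimal hker hcl
  rw [hs.closure_eq] at this
  exact this (Set.mem_univ x)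

end Aux

/-- The Koopman operator of an invertible measure-preserving transformation `T` of a
probability space `(Z, μ)` has *simple spectrum* if it admits a cyclic vector: some
`f ∈ L²(Z, μ)` whose orbit `{f ∘ T^k : k ∈ ℤ}` has dense linear span in `L²(Z, μ)`. -/
def HasSimpleKoopmanSpectrum {Z : Type*} [MeasurableSpace Z] (μ : Measure Z)
    (T : Equiv.Perm Z) : Prop :=
  ∃ f : Lp ℂ 2 μ,
    Dense (↑(Submodule.span ℂ
        {h : Lp ℂ 2 μ | ∃ k : ℤ, (h : Z → ℂ) =ᵐ[μ] fun x => f ((T ^ k) x)}) :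
      Set (Lp ℂ 2 μ))

local notation "⟪" x ", " y "⟫" => @inner ℂ _ _ x y

set_option maxHeartbeats 2000000 in
/-- Lemma 1 of the paper.  Let `T`, `S` be invertible bimeasurable
measure-preserving transformations of probability spaces `(X, μ)`, `(Y, ν)` whose
Koopman operators both have simple spectrum.  If for some sequence `n i` the Koopman
operators of `(T × S)^[n i]` converge weakly to the Koopman operator of `id × S`
(i.e. `⟪F ∘ (T × S)^[n i], G⟫ → ⟪F ∘ (id × S), G⟫` for all `F, G ∈ L²(μ ⊗ ν)`),
then the Koopman operator of `T × S` has simple spectrum. -/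
theorem simple_spectrum_of_product_of_weak_limit
    {X Y : Type*} [MeasurableSpace X] [MeasurableSpace Y]
    (μ : Measure X) (ν : Measure Y) [IsProbabilityMeasure μ] [IsProbabilityMeasure ν]
    (T : X ≃ᵐ X) (S : Y ≃ᵐ Y)
    (hT : MeasurePreserving T μ μ) (hS : MeasurePreserving S ν ν)
    (hTs : HasSimpleKoopmanSpectrum μ T.toEquiv)
    (hSs : HasSimpleKoopmanSpectrum ν S.toEquiv)
    (n : ℕ → ℕ)
    (hweak : ∀ F G : Lp ℂ 2 (μ.prod ν),
      Tendsto
        (fun i => ∫ z, F ((Prod.map (⇑T) (⇑S))^[n i] z) * (starRingEnd ℂ) (G z)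
          ∂(μ.prod ν))
        atTop
        (nhds (∫ z : X × Y, F (z.1, S z.2) * (starRingEnd ℂ) (G z) ∂(μ.prod ν)))) :
    HasSimpleKoopmanSpectrum (μ.prod ν) (T.toEquiv.prodCongr S.toEquiv) := by
  classical
  obtain ⟨f, hf⟩ := hTs
  obtain ⟨g, hg⟩ := hSs
  -- basic maps
  set PM : X × Y → X × Y := Prod.map ⇑T ⇑S with hPMdef
  set PM' : X × Y → X × Y := Prod.map ⇑T.symm ⇑S.symm with hPM'def
  set VM : X × Y → X × Y := Prod.map id ⇑S with hVMdef
  set VM' : X × Y → X × Y := Prod.map id ⇑S.symm with hVM'def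
  have hPM : MeasurePreserving PM (μ.prod ν) (μ.prod ν) := hT.prod hS
  have hPM' : MeasurePreserving PM' (μ.prod ν) (μ.prod ν) := (hT.symm T).prod (hS.symm S)
  have hVM : MeasurePreserving VM (μ.prod ν) (μ.prod ν) := (MeasurePreserving.id μ).prod hS
  have hVM' : MeasurePreserving VM' (μ.prod ν) (μ.prod ν) :=
    (MeasurePreserving.id μ).prod (hS.symm S)
  -- Koopman operators
  let Um : ℕ → (Lp ℂ 2 (μ.prod ν) →ₗᵢ[ℂ] Lp ℂ 2 (μ.prod ν)) := fun m =>
    Lp.compMeasurePreservingₗᵢ ℂ (PM^[m]) (hPM.iterate m)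
  let Um' : ℕ → (Lp ℂ 2 (μ.prod ν) →ₗᵢ[ℂ] Lp ℂ 2 (μ.prod ν)) := fun m =>
    Lp.compMeasurePreservingₗᵢ ℂ (PM'^[m]) (hPM'.iterate m)
  let V : Lp ℂ 2 (μ.prod ν) →ₗᵢ[ℂ] Lp ℂ 2 (μ.prod ν) :=
    Lp.compMeasurePreservingₗᵢ ℂ VM hVM
  let V' : Lp ℂ 2 (μ.prod ν) →ₗᵢ[ℂ] Lp ℂ 2 (μ.prod ν) :=
    Lp.compMeasurePreservingₗᵢ ℂ VM' hVM'
  have hUmc : ∀ m v, ⇑(Um m v) =ᵐ[μ.prod ν] v ∘ (PM^[m]) := fun m v =>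
    Lp.coeFn_compMeasurePreserving v (hPM.iterate m)
  have hUm'c : ∀ m v, ⇑(Um' m v) =ᵐ[μ.prod ν] v ∘ (PM'^[m]) := fun m v =>
    Lp.coeFn_compMeasurePreserving v (hPM'.iterate m)
  have hVc : ∀ v, ⇑(V v) =ᵐ[μ.prod ν] v ∘ VM := fun v =>
    Lp.coeFn_compMeasurePreserving v hVM
  have hV'c : ∀ v, ⇑(V' v) =ᵐ[μ.prod ν] v ∘ VM' := fun v =>
    Lp.coeFn_compMeasurePreserving v hVM'
  -- extensionality in Lp
  have lpext : ∀ E E' : Lp ℂ 2 (μ.prod ν), ⇑E =ᵐ[μ.prod ν] ⇑E' → E = E' := by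
    intro E E' h
    exact Lp.ext h
  -- tensor elements
  set ten : ℤ → ℤ → (X × Y) → ℂ :=
    fun j k z => f (mzpow T j z.1) * g (mzpow S k z.2) with htendef
  have hten : ∀ j k, MemLp (ten j k) 2 (μ.prod ν) := fun j k =>
    memLp_tensor ((Lp.memLp f).comp_measurePreserving (measurePreserving_mzpow hT j))
      ((Lp.memLp g).comp_measurePreserving (measurePreserving_mzpow hS k))
  set t : ℤ → ℤ → Lp ℂ 2 (μ.prod ν) := fun j k => (hten j k).toLp (ten j k) with htdef
  have ht : ∀ j k, ⇑(t j k) =ᵐ[μ.prod ν] ten j k := fun j k => (hten j k).coeFn_toLp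
  -- the cyclic vector
  refine ⟨t 0 0, ?_⟩
  set A : Submodule ℂ (Lp ℂ 2 (μ.prod ν)) := Submodule.span ℂ
    {h : Lp ℂ 2 (μ.prod ν) | ∃ k : ℤ,
      (h : X × Y → ℂ) =ᵐ[μ.prod ν] fun x => (t 0 0) (((T.toEquiv.prodCongr S.toEquiv) ^ k) x)}
    with hAdef
  show Dense (↑A : Set (Lp ℂ 2 (μ.prod ν)))
  -- generators are the diagonal tensor elements
  have hgen : ∀ k : ℤ,
      (fun x => (t 0 0) (((T.toEquiv.prodCongr S.toEquiv) ^ k) x)) =ᵐ[μ.prod ν] ten k k := by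
    intro k
    have hmk : MeasurePreserving (Prod.map (mzpow T k) (mzpow S k)) (μ.prod ν) (μ.prod ν) :=
      (measurePreserving_mzpow hT k).prod (measurePreserving_mzpow hS k)
    have h1 : (⇑(t 0 0)) ∘ (Prod.map (mzpow T k) (mzpow S k))
        =ᵐ[μ.prod ν] (ten 0 0) ∘ (Prod.map (mzpow T k) (mzpow S k)) :=
      Measure.QuasiMeasurePreserving.ae_eq_comp hmk.quasiMeasurePreserving (ht 0 0)
    have h2 : (fun x => (t 0 0) (((T.toEquiv.prodCongr S.toEquiv) ^ k) x))
        = (⇑(t 0 0)) ∘ (Prod.map (mzpow T k) (mzpow S k)) := by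
      funext z
      simp only [Function.comp_apply, prodCongr_zpow_apply]
      rfl
    have h3 : (ten 0 0) ∘ (Prod.map (mzpow T k) (mzpow S k)) = ten k k := by
      funext z
      show ten 0 0 (mzpow T k z.1, mzpow S k z.2) = ten k k z
      simp only [htendef, mzpow_zero, id_eq]
    rw [h2, ← h3]
    exact h1
  have hmem : ∀ (E : Lp ℂ 2 (μ.prod ν)) (k : ℤ), ⇑E =ᵐ[μ.prod ν] ten k k → E ∈ A := by
    intro E k hk
    exact Submodule.subset_span ⟨k, hk.trans (hgen k).symm⟩
  -- A is invariant under the Koopman iterates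
  have hUmA : ∀ (m : ℕ) v, v ∈ A → Um m v ∈ A := by
    intro m v hv
    have hle : A ≤ Submodule.comap (Um m).toLinearMap A := by
      refine Submodule.span_le.2 ?_
      rintro h ⟨k, hk⟩
      have hk' : ⇑h =ᵐ[μ.prod ν] ten k k := hk.trans (hgen k)
      refine Submodule.mem_comap.2 (hmem _ (k + m) ?_)
      have e1 : ⇑h ∘ (PM^[m]) =ᵐ[μ.prod ν] (ten k k) ∘ (PM^[m]) :=
        Measure.QuasiMeasurePreserving.ae_eq_comp
          ((hPM.iterate m).quasiMeasurePreserving) hk'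
      have e2 : (ten k k) ∘ (PM^[m]) = ten (k + m) (k + m) := by
        funext z
        show ten k k ((PM^[m]) z) = _
        rw [hPMdef, Prod.map_iterate]
        show ten k k ((⇑T)^[m] z.1, (⇑S)^[m] z.2) = _
        simp only [htendef, mzpow_apply_iterate]
      exact ((hUmc m h).trans e1).trans (by rw [e2])
    exact hle hv
  have hUm'A : ∀ (m : ℕ) v, v ∈ A → Um' m v ∈ A := by
    intro m v hv
    have hle : A ≤ Submodule.comap (Um' m).toLinearMap A := by
      refine Submodule.span_le.2 ?_
      rintro h ⟨k, hk⟩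
      have hk' : ⇑h =ᵐ[μ.prod ν] ten k k := hk.trans (hgen k)
      refine Submodule.mem_comap.2 (hmem _ (k - m) ?_)
      have e1 : ⇑h ∘ (PM'^[m]) =ᵐ[μ.prod ν] (ten k k) ∘ (PM'^[m]) :=
        Measure.QuasiMeasurePreserving.ae_eq_comp
          ((hPM'.iterate m).quasiMeasurePreserving) hk'
      have e2 : (ten k k) ∘ (PM'^[m]) = ten (k - m) (k - m) := by
        funext z
        show ten k k ((PM'^[m]) z) = _
        rw [hPM'def, Prod.map_iterate]
        show ten k k ((⇑T.symm)^[m] z.1, (⇑S.symm)^[m] z.2) = _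
        simp only [htendef, mzpow_apply_iterate_symm]
      exact ((hUm'c m h).trans e1).trans (by rw [e2])
    exact hle hv
  have hclA : (↑A.topologicalClosure : Set (Lp ℂ 2 (μ.prod ν))) = closure ↑A :=
    Submodule.topologicalClosure_coe A
  have hUmZ : ∀ (m : ℕ) v, v ∈ A.topologicalClosure → Um m v ∈ A.topologicalClosure := by
    intro m v hv
    rw [← SetLike.mem_coe, hclA] at hv ⊢
    exact map_mem_closure (Um m).continuous hv (fun x hx => hUmA m x hx)
  have hUm'Z : ∀ (m : ℕ) v, v ∈ A.topologicalClosure → Um' m v ∈ A.topologicalClosure := by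
    intro m v hv
    rw [← SetLike.mem_coe, hclA] at hv ⊢
    exact map_mem_closure (Um' m).continuous hv (fun x hx => hUm'A m x hx)
  -- orthogonality to the closure
  have horthC : ∀ u : Lp ℂ 2 (μ.prod ν), u ∈ Aᗮ →
      ∀ x, x ∈ A.topologicalClosure → ⟪x, u⟫ = 0 := by
    intro u hu x hx
    have h1 : (↑A : Set (Lp ℂ 2 (μ.prod ν))) ⊆ {x | ⟪x, u⟫ = 0} :=
      fun a ha => (Submodule.mem_orthogonal A u).1 hu a ha
    have hcl : IsClosed {x : Lp ℂ 2 (μ.prod ν) | ⟪x, u⟫ = 0} :=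
      isClosed_eq (continuous_id.inner continuous_const) continuous_const
    rw [← SetLike.mem_coe, hclA] at hx
    exact closure_minimal h1 hcl hx
  -- membership criterion via double orthogonal
  have hAoo : ∀ x : Lp ℂ 2 (μ.prod ν), (∀ u ∈ Aᗮ, ⟪u, x⟫ = 0) → x ∈ A.topologicalClosure := by
    intro x hx
    rw [← Submodule.orthogonal_orthogonal_eq_closure]
    exact (Submodule.mem_orthogonal _ _).2 hx
  -- integrals as inner products
  have iinner : ∀ (u vv : Lp ℂ 2 (μ.prod ν)) (φ : X × Y → ℂ), ⇑vv =ᵐ[μ.prod ν] φ →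
      ∫ z, φ z * (starRingEnd ℂ) (u z) ∂(μ.prod ν) = ⟪u, vv⟫ := by
    intro u vv φ h
    rw [MeasureTheory.L2.inner_def]
    refine integral_congr_ae ?_
    filter_upwards [h] with z hz
    rw [RCLike.inner_apply, ← hz]
  -- weak limit
  have wlim : ∀ v u : Lp ℂ 2 (μ.prod ν),
      (∀ i : ℕ, ∫ z, v (PM^[n i] z) * (starRingEnd ℂ) (u z) ∂(μ.prod ν) = 0) →
      ∫ z, v (z.1, S z.2) * (starRingEnd ℂ) (u z) ∂(μ.prod ν) = 0 := by
    intro v u h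
    have h2 := hweak v u
    rw [show (fun i => ∫ z, v (PM^[n i] z) * (starRingEnd ℂ) (u z) ∂(μ.prod ν))
      = fun _ => (0 : ℂ) from funext h] at h2
    exact (tendsto_nhds_unique h2 tendsto_const_nhds).symm ▸ rfl
  -- conj-inner helper
  have innerflip : ∀ x y : Lp ℂ 2 (μ.prod ν), ⟪x, y⟫ = 0 → ⟪y, x⟫ = 0 := by
    intro x y h
    rw [← inner_conj_symm, h, map_zero]
  -- V leaves the closure invariant
  have hVZ : ∀ v, v ∈ A.topologicalClosure → V v ∈ A.topologicalClosure := by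
    intro v hv
    refine hAoo _ ?_
    intro u hu
    have h0 : ∀ i : ℕ, ∫ z, v (PM^[n i] z) * (starRingEnd ℂ) (u z) ∂(μ.prod ν) = 0 := by
      intro i
      rw [iinner u (Um (n i) v) (fun z => v (PM^[n i] z)) (hUmc (n i) v)]
      exact innerflip _ _ (horthC u hu _ (hUmZ (n i) v hv))
    have h1 := wlim v u h0
    rw [iinner u (V v) (fun z => v (z.1, S z.2)) (hVc v)] at h1
    exact h1
  -- V' leaves the closure invariant
  have hVV' : ∀ v, V (V' v) = v := by
    intro v
    refine lpext _ _ ?_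
    have e1 : ⇑(V' v) ∘ VM =ᵐ[μ.prod ν] (⇑v ∘ VM') ∘ VM :=
      Measure.QuasiMeasurePreserving.ae_eq_comp hVM.quasiMeasurePreserving (hV'c v)
    have e2 : (⇑v ∘ VM') ∘ VM = ⇑v := by
      funext z
      show v (VM' (VM z)) = v z
      rw [hVMdef, hVM'def]
      show v (id (id z.1), S.symm (S z.2)) = v z
      rw [MeasurableEquiv.symm_apply_apply]
      rfl
    exact ((hVc (V' v)).trans e1).trans (by rw [e2])
  have hUmUm' : ∀ (m : ℕ) v, Um m (Um' m v) = v := by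
    intro m v
    refine lpext _ _ ?_
    have e1 : ⇑(Um' m v) ∘ (PM^[m]) =ᵐ[μ.prod ν] (⇑v ∘ (PM'^[m])) ∘ (PM^[m]) :=
      Measure.QuasiMeasurePreserving.ae_eq_comp
        ((hPM.iterate m).quasiMeasurePreserving) (hUm'c m v)
    have e2 : (⇑v ∘ (PM'^[m])) ∘ (PM^[m]) = ⇑v := by
      have hli : Function.LeftInverse PM' PM := by
        intro z
        rw [hPMdef, hPM'def]
        show (T.symm (T z.1), S.symm (S z.2)) = z
        rw [MeasurableEquiv.symm_apply_apply, MeasurableEquiv.symm_apply_apply]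
      funext z
      show v ((PM'^[m]) ((PM^[m]) z)) = v z
      rw [hli.iterate m z]
    exact ((hUmc m (Um' m v)).trans e1).trans (by rw [e2])
  have hV'Z : ∀ v, v ∈ A.topologicalClosure → V' v ∈ A.topologicalClosure := by
    intro v hv
    refine hAoo _ ?_
    intro u hu
    have key : ⟪u, V' v⟫ = ⟪V u, v⟫ := by
      conv_rhs => rw [← hVV' v]
      exact (V.inner_map_map u (V' v)).symm
    rw [key]
    refine innerflip _ _ ?_
    have h0 : ∀ i : ℕ, ∫ z, u (PM^[n i] z) * (starRingEnd ℂ) (v z) ∂(μ.prod ν) = 0 := by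
      intro i
      rw [iinner v (Um (n i) u) (fun z => u (PM^[n i] z)) (hUmc (n i) u)]
      have e3 : ⟪Um (n i) u, v⟫ = ⟪u, Um' (n i) v⟫ := by
        conv_lhs => rw [← hUmUm' (n i) v]
        exact (Um (n i)).inner_map_map u (Um' (n i) v)
      rw [← inner_conj_symm, e3, innerflip _ _ (horthC u hu _ (hUm'Z (n i) v hv)), map_zero]
    have h1 := wlim u v h0
    rw [iinner v (V u) (fun z => u (z.1, S z.2)) (hVc u)] at h1
    exact h1
  -- all tensor elements lie in the closure
  have hVt : ∀ j k : ℤ, V (t j k) = t j (k + 1) := by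
    intro j k
    refine lpext _ _ ?_
    have e1 : ⇑(t j k) ∘ VM =ᵐ[μ.prod ν] (ten j k) ∘ VM :=
      Measure.QuasiMeasurePreserving.ae_eq_comp hVM.quasiMeasurePreserving (ht j k)
    have e2 : (ten j k) ∘ VM = ten j (k + 1) := by
      funext z
      show ten j k (id z.1, S z.2) = _
      simp only [htendef, id_eq, mzpow_apply_self]
    exact ((hVc (t j k)).trans e1).trans (e2 ▸ (ht j (k + 1)).symm)
  have hV't : ∀ j k : ℤ, V' (t j k) = t j (k - 1) := by
    intro j k
    refine lpext _ _ ?_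
    have e1 : ⇑(t j k) ∘ VM' =ᵐ[μ.prod ν] (ten j k) ∘ VM' :=
      Measure.QuasiMeasurePreserving.ae_eq_comp hVM'.quasiMeasurePreserving (ht j k)
    have e2 : (ten j k) ∘ VM' = ten j (k - 1) := by
      funext z
      show ten j k (id z.1, S.symm z.2) = _
      simp only [htendef, id_eq, mzpow_apply_symm]
    exact ((hV'c (t j k)).trans e1).trans (e2 ▸ (ht j (k - 1)).symm)
  have htZ : ∀ j k : ℤ, t j k ∈ A.topologicalClosure := by
    intro j k
    have hdiag : ∀ a : ℤ, t a a ∈ A.topologicalClosure := fun a =>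
      A.le_topologicalClosure (hmem (t a a) a (ht a a))
    have key : ∀ d : ℤ, t j (j + d) ∈ A.topologicalClosure := by
      intro d
      induction d using Int.induction_on with
      | zero => simpa using hdiag j
      | succ m ihm =>
          have h1 := hVZ _ ihm
          rw [hVt] at h1
          have e : j + ((m : ℤ) + 1) = (j + m) + 1 := by ring
          rw [e]
          exact h1
      | pred m ihm =>
          have h1 := hV'Z _ ihm
          rw [hV't] at h1
          have e : j + (-(m : ℤ) - 1) = (j + -(m : ℤ)) - 1 := by ring
          rw [e]
          exact h1
    have h2 := key (k - j)
    rwa [show j + (k - j) = k by ring] at h2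
  -- the bilinear tensor map
  set Bmap : Lp ℂ 2 μ → Lp ℂ 2 ν → Lp ℂ 2 (μ.prod ν) := fun u v =>
    (memLp_tensor (Lp.memLp u) (Lp.memLp v)).toLp (fun z => u z.1 * v z.2) with hBdef
  have hBc : ∀ u v, ⇑(Bmap u v) =ᵐ[μ.prod ν] fun z => u z.1 * v z.2 := fun u v =>
    MemLp.coeFn_toLp _
  have hBaddL : ∀ u u' v, Bmap (u + u') v = Bmap u v + Bmap u' v := by
    intro u u' v
    refine lpext _ _ ?_
    filter_upwards [hBc (u + u') v, ae_eq_fst (ν := ν) (Lp.coeFn_add u u'),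
      Lp.coeFn_add (Bmap u v) (Bmap u' v), hBc u v, hBc u' v] with z h1 h2 h3 h4 h5
    rw [h1, h3, Pi.add_apply, h4, h5, h2, Pi.add_apply]
    ring
  have hBsmulL : ∀ (c : ℂ) u v, Bmap (c • u) v = c • Bmap u v := by
    intro c u v
    refine lpext _ _ ?_
    filter_upwards [hBc (c • u) v, ae_eq_fst (ν := ν) (Lp.coeFn_smul c u),
      Lp.coeFn_smul c (Bmap u v), hBc u v] with z h1 h2 h3 h4
    rw [h1, h3, Pi.smul_apply, h4, h2, Pi.smul_apply, smul_eq_mul, smul_eq_mul]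
    ring
  have hBaddR : ∀ u v v', Bmap u (v + v') = Bmap u v + Bmap u v' := by
    intro u v v'
    refine lpext _ _ ?_
    filter_upwards [hBc u (v + v'), ae_eq_snd (μ := μ) (Lp.coeFn_add v v'),
      Lp.coeFn_add (Bmap u v) (Bmap u v'), hBc u v, hBc u v'] with z h1 h2 h3 h4 h5
    rw [h1, h3, Pi.add_apply, h4, h5, h2, Pi.add_apply]
    ring
  have hBsmulR : ∀ (c : ℂ) u v, Bmap u (c • v) = c • Bmap u v := by
    intro c u v
    refine lpext _ _ ?_
    filter_upwards [hBc u (c • v), ae_eq_snd (μ := μ) (Lp.coeFn_smul c v),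
      Lp.coeFn_smul c (Bmap u v), hBc u v] with z h1 h2 h3 h4
    rw [h1, h3, Pi.smul_apply, h4, h2, Pi.smul_apply, smul_eq_mul, smul_eq_mul]
    ring
  have hBnorm : ∀ u v, ‖Bmap u v‖ = ‖u‖ * ‖v‖ := by
    intro u v
    rw [hBdef]
    rw [Lp.norm_toLp, eLpNorm_tensor (Lp.aestronglyMeasurable u) (Lp.aestronglyMeasurable v),
      ENNReal.toReal_mul, ← Lp.norm_def, ← Lp.norm_def]
  set L1 : Lp ℂ 2 ν → (Lp ℂ 2 μ →L[ℂ] Lp ℂ 2 (μ.prod ν)) := fun v =>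
    LinearMap.mkContinuous
      { toFun := fun u => Bmap u v
        map_add' := fun u u' => hBaddL u u' v
        map_smul' := fun c u => hBsmulL c u v }
      ‖v‖ (fun u => le_of_eq (by simp only [LinearMap.coe_mk, AddHom.coe_mk]; rw [hBnorm]; ring))
    with hL1def
  set L2 : Lp ℂ 2 μ → (Lp ℂ 2 ν →L[ℂ] Lp ℂ 2 (μ.prod ν)) := fun u =>
    LinearMap.mkContinuous
      { toFun := fun v => Bmap u v
        map_add' := fun v v' => hBaddR u v v'
        map_smul' := fun c v => hBsmulR c u v }
      ‖u‖ (fun v => le_of_eq (by simp only [LinearMap.coe_mk, AddHom.coe_mk]; rw [hBnorm]))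
    with hL2def
  have hL1app : ∀ v u, (L1 v) u = Bmap u v := fun _ _ => rfl
  have hL2app : ∀ u v, (L2 u) v = Bmap u v := fun _ _ => rfl
  -- tensors of orbit elements
  have hBt : ∀ (u : Lp ℂ 2 μ) (v : Lp ℂ 2 ν) (j k : ℤ),
      (⇑u =ᵐ[μ] fun x => f (mzpow T j x)) → (⇑v =ᵐ[ν] fun y => g (mzpow S k y)) →
      Bmap u v = t j k := by
    intro u v j k hu hv
    refine lpext _ _ ?_
    filter_upwards [hBc u v, ae_eq_fst (ν := ν) hu, ae_eq_snd (μ := μ) hv, ht j k]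
      with z h1 h2 h3 h4
    rw [h1, h2, h3, h4]
  -- conclusion via orthogonality
  suffices hbot : Aᗮ = ⊥ by
    have htop : A.topologicalClosure = ⊤ := Submodule.topologicalClosure_eq_top_iff.2 hbot
    rw [dense_iff_closure_eq, ← hclA, htop]
    rfl
  refine (Submodule.eq_bot_iff _).2 (fun w hw => ?_)
  have hw0 : ∀ x, x ∈ A.topologicalClosure → ⟪x, w⟫ = 0 := horthC w hw
  have step1 : ∀ v : Lp ℂ 2 ν, (∃ k : ℤ, ⇑v =ᵐ[ν] fun y => g ((S.toEquiv ^ k) y)) →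
      ∀ u : Lp ℂ 2 μ, ⟪w, Bmap u v⟫ = 0 := by
    rintro v ⟨k, hk⟩ u
    have hv' : ⇑v =ᵐ[ν] fun y => g (mzpow S k y) := by rw [mzpow_eq]; exact hk
    have happ := vanish_of_dense hf ((innerSL ℂ w).comp (L1 v)) ?_ u
    · rw [ContinuousLinearMap.comp_apply, hL1app, innerSL_apply_apply] at happ
      exact happ
    · rintro x ⟨j, hj⟩
      have hx' : ⇑x =ᵐ[μ] fun a => f (mzpow T j a) := by rw [mzpow_eq]; exact hj
      have hBx : Bmap x v = t j k := hBt x v j k hx' hv'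
      rw [ContinuousLinearMap.comp_apply, hL1app, hBx, innerSL_apply_apply]
      exact innerflip _ _ (hw0 (t j k) (htZ j k))
  have step2 : ∀ (u : Lp ℂ 2 μ) (v : Lp ℂ 2 ν), ⟪w, Bmap u v⟫ = 0 := by
    intro u v
    have happ := vanish_of_dense hg ((innerSL ℂ w).comp (L2 u)) ?_ v
    · rw [ContinuousLinearMap.comp_apply, hL2app, innerSL_apply_apply] at happ
      exact happ
    · intro x hx
      rw [ContinuousLinearMap.comp_apply, hL2app, innerSL_apply_apply]
      exact step1 x hx u
  -- integrability
  have hwInt : Integrable (⇑w) (μ.prod ν) := (Lp.memLp w).integrable one_le_two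
  have hwcInt : Integrable (fun z => (starRingEnd ℂ) (w z)) (μ.prod ν) := by
    refine hwInt.mono ?_ (Filter.Eventually.of_forall fun z => ?_)
    · exact RCLike.continuous_conj.comp_aestronglyMeasurable hwInt.aestronglyMeasurable
    · rw [RCLike.norm_conj]
  -- rectangles
  have stepInd : ∀ (s : Set X) (r : Set Y), MeasurableSet s → MeasurableSet r →
      ∫ z in s ×ˢ r, (starRingEnd ℂ) (w z) ∂(μ.prod ν) = 0 := by
    intro s r hs hr
    have h2 := step2 (indicatorConstLp 2 hs (measure_ne_top μ s) (1 : ℂ))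
      (indicatorConstLp 2 hr (measure_ne_top ν r) (1 : ℂ))
    rw [MeasureTheory.L2.inner_def] at h2
    have hae : (fun z => ⟪w z, (Bmap (indicatorConstLp 2 hs (measure_ne_top μ s) (1 : ℂ))
          (indicatorConstLp 2 hr (measure_ne_top ν r) (1 : ℂ))) z⟫)
        =ᵐ[μ.prod ν] (s ×ˢ r).indicator (fun z => (starRingEnd ℂ) (w z)) := by
      filter_upwards [hBc (indicatorConstLp 2 hs (measure_ne_top μ s) (1 : ℂ))
          (indicatorConstLp 2 hr (measure_ne_top ν r) (1 : ℂ)),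
        ae_eq_fst (ν := ν) (indicatorConstLp_coeFn (p := 2) (hs := hs)
          (hμs := measure_ne_top μ s) (c := (1 : ℂ))),
        ae_eq_snd (μ := μ) (indicatorConstLp_coeFn (p := 2) (hs := hr)
          (hμs := measure_ne_top ν r) (c := (1 : ℂ)))] with z h1 h2' h3'
      rw [RCLike.inner_apply, h1, h2', h3']
      by_cases hzs : z.1 ∈ s <;> by_cases hzr : z.2 ∈ r <;>
        simp [Set.indicator, hzs, hzr, Set.mem_prod]
    rw [integral_congr_ae hae, integral_indicator (hs.prod hr)] at h2
    exact h2
  -- all measurable sets, via the π-system of rectangles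
  have stepAll : ∀ c : Set (X × Y), MeasurableSet c →
      ∫ z in c, (starRingEnd ℂ) (w z) ∂(μ.prod ν) = 0 := by
    have htotal : ∫ z, (starRingEnd ℂ) (w z) ∂(μ.prod ν) = 0 := by
      have h3 := stepInd Set.univ Set.univ MeasurableSet.univ MeasurableSet.univ
      rwa [Set.univ_prod_univ, Measure.restrict_univ] at h3
    intro c hc
    refine MeasurableSpace.induction_on_inter
      (C := fun c _ => ∫ z in c, (starRingEnd ℂ) (w z) ∂(μ.prod ν) = 0)
      generateFrom_prod.symm isPiSystem_prod ?_ ?_ ?_ ?_ c hc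
    · simp
    · rintro c ⟨s, hs, r, hr, rfl⟩
      exact stepInd s r hs hr
    · intro c hcm hC
      have hadd := integral_add_compl hcm hwcInt
      rw [hC, zero_add, htotal] at hadd
      exact hadd
    · intro F hdisj hmeas hC
      rw [integral_iUnion hmeas hdisj hwcInt.integrableOn]
      simp [hC]
  -- conclude that w vanishes
  have hwae : ⇑w =ᵐ[μ.prod ν] 0 := by
    refine Lp.ae_eq_zero_of_forall_setIntegral_eq_zero w two_ne_zero (by norm_num)
      (fun s _ _ => hwInt.integrableOn) (fun s hs _ => ?_)
    have h3 := stepAll s hs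
    rw [integral_conj] at h3
    simpa using h3
  exact lpext w 0 (hwae.trans (Lp.coeFn_zero ℂ 2 (μ.prod ν)).symm)
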